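/- arXiv:1812.09619 — 6 statements merged into one kernel-verified Lean document; each statement's English description precedes it below -/
import Mathlib

section
/- Calibration of the LA attention index from default-choice probabilities: Suppose P is generated by a logit-attention HRC rule with attention index η ∈ Δ(2^X), η > 0 on every subset, i.e. p(o,A) = η(∅)/Σ_{C⊆A} η(C) for every nonempty A ⊆ X (and p(o,∅)=1 with the convention that the sum over C⊆∅ is η(∅)). Then for every D ⊆ X, η(D) = η(∅) · Σ_{B⊆D} (−1)^{|D\B|} / p(o,B), and in particular η(D)/η(X-normalization) can be computed as Σ_{B⊆D} (−1)^{|D\B|} p(o,X)/p(o,B) after rescaling so that Σ_{C⊆X} η(C) = η(∅)/p(o,X). -/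
open Classical Finset

lemma mobius_powerset_inv {X : Type*} [DecidableEq X] (η : Finset X → ℝ) (D : Finset X) :
    ∑ B ∈ D.powerset, (-1 : ℝ) ^ (D \ B).card * (∑ C ∈ B.powerset, η C) = η D := by
  have h1 : ∑ B ∈ D.powerset, (-1 : ℝ) ^ (D \ B).card * (∑ C ∈ B.powerset, η C)
      = ∑ B ∈ D.powerset, ∑ C ∈ B.powerset, (-1 : ℝ) ^ (D \ B).card * η C := by
    simp [Finset.mul_sum]
  rw [h1]
  rw [Finset.sum_comm' (s' := fun C => D.powerset.filter (fun B => C ⊆ B)) (t' := D.powerset)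
    (by
      intro B C
      simp only [Finset.mem_powerset, Finset.mem_filter]
      constructor
      · rintro ⟨hBD, hCB⟩; exact ⟨⟨hBD, hCB⟩, hCB.trans hBD⟩
      · rintro ⟨⟨hBD, hCB⟩, _⟩; exact ⟨hBD, hCB⟩)]
  rw [Finset.sum_eq_single D]
  · rw [Finset.sum_eq_single D]
    · simp
    · intro B hB hne
      simp only [Finset.mem_filter, Finset.mem_powerset] at hB
      exact absurd (Finset.Subset.antisymm hB.1 hB.2) hne
    · intro h
      exact absurd (by simp [Finset.mem_filter]) h
  · intro C hC hne
    simp only [Finset.mem_powerset] at hC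
    have hre : ∑ B ∈ D.powerset.filter (fun B => C ⊆ B), (-1 : ℝ) ^ (D \ B).card * η C
        = ∑ E ∈ (D \ C).powerset, (-1 : ℝ) ^ E.card * η C := by
      apply Finset.sum_bij' (fun B _ => D \ B) (fun E _ => D \ E)
      · intro B hB
        simp only [Finset.mem_filter, Finset.mem_powerset] at hB ⊢
        exact Finset.sdiff_subset_sdiff le_rfl hB.2
      · intro E hE
        simp only [Finset.mem_powerset, Finset.mem_filter] at hE ⊢
        constructor
        · exact Finset.sdiff_subset
        · intro x hx
          simp only [Finset.mem_sdiff]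
          refine ⟨hC hx, fun hxE => ?_⟩
          have := hE hxE
          simp [Finset.mem_sdiff, hx] at this
      · intro B hB
        simp only [Finset.mem_filter, Finset.mem_powerset] at hB
        exact Finset.sdiff_sdiff_eq_self hB.1
      · intro E hE
        simp only [Finset.mem_powerset] at hE
        exact Finset.sdiff_sdiff_eq_self (hE.trans Finset.sdiff_subset)
      · intro B hB
        rfl
    have hz : ∑ E ∈ (D \ C).powerset, (-1 : ℝ) ^ E.card = 0 := by
      have h0 : D \ C ≠ ∅ := by
        intro h
        exact hne (Finset.Subset.antisymm hC (Finset.sdiff_eq_empty_iff_subset.mp h))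
      have := Finset.sum_powerset_neg_one_pow_card (x := D \ C)
      rw [if_neg h0] at this
      calc ∑ E ∈ (D \ C).powerset, (-1 : ℝ) ^ E.card
          = ((∑ E ∈ (D \ C).powerset, (-1 : ℤ) ^ E.card : ℤ) : ℝ) := by push_cast; ring
        _ = 0 := by rw [this]; simp
    rw [hre, ← Finset.sum_mul, hz, zero_mul]
  · intro h
    simp at h

/-- Calibration of the LA attention index from default-choice probabilities:
if `p(o,A) = η(∅) / ∑_{C ⊆ A} η(C)` for a strictly positive `η ∈ Δ(2^X)`, then
`η(D) = η(∅) · ∑_{B ⊆ D} (-1)^{|D\B|} / p(o,B)`, and since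
`∑_{C ⊆ X} η(C) = η(∅)/p(o,X)` (= 1), also
`η(D) = ∑_{B ⊆ D} (-1)^{|D\B|} · p(o,X)/p(o,B)`. -/
theorem LA_attention_index_calibration
    {X : Type*} [Fintype X] [DecidableEq X]
    (η : Finset X → ℝ) (po : Finset X → ℝ)
    (hpos : ∀ C : Finset X, 0 < η C)
    (hsum : ∑ C ∈ (Finset.univ : Finset X).powerset, η C = 1)
    (hpo : ∀ A : Finset X, A.Nonempty → po A = η ∅ / ∑ C ∈ A.powerset, η C)
    (hpo0 : po ∅ = 1) :
    (∀ D : Finset X,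
      η D = η ∅ * ∑ B ∈ D.powerset, (-1 : ℝ) ^ (D \ B).card / po B) ∧
    (∀ D : Finset X,
      η D = ∑ B ∈ D.powerset,
        (-1 : ℝ) ^ (D \ B).card * (po Finset.univ / po B)) := by
  have key : ∀ B : Finset X, η ∅ / po B = ∑ C ∈ B.powerset, η C := by
    intro B
    rcases B.eq_empty_or_nonempty with rfl | hB
    · simp [hpo0]
    · have hS : 0 < ∑ C ∈ B.powerset, η C :=
        Finset.sum_pos (fun C _ => hpos C) ⟨∅, by simp⟩
      rw [hpo B hB, div_div_eq_mul_div, mul_comm, mul_div_assoc,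
        div_self (hpos ∅).ne', mul_one]
  have part1 : ∀ D : Finset X,
      η D = η ∅ * ∑ B ∈ D.powerset, (-1 : ℝ) ^ (D \ B).card / po B := by
    intro D
    rw [Finset.mul_sum]
    calc η D = ∑ B ∈ D.powerset, (-1 : ℝ) ^ (D \ B).card * (∑ C ∈ B.powerset, η C) :=
          (mobius_powerset_inv η D).symm
      _ = ∑ B ∈ D.powerset, η ∅ * ((-1 : ℝ) ^ (D \ B).card / po B) := by
          refine Finset.sum_congr rfl fun B _ => ?_
          rw [← key B]; ring
  refine ⟨part1, fun D => ?_⟩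
  have huniv : po (Finset.univ : Finset X) = η ∅ := by
    rcases (Finset.univ : Finset X).eq_empty_or_nonempty with h | h
    · rw [h, hpo0]
      rw [h] at hsum
      simpa using hsum.symm
    · rw [hpo _ h, hsum, div_one]
  rw [part1 D, Finset.mul_sum]
  exact Finset.sum_congr rfl fun B _ => by rw [huniv]; ring
end

section
/- The MM consideration rule is a special case of the LA rule: if m_A(D) = Π_{a∈D} γ(a) · Π_{b∈A\D} (1 − γ(b)) for γ : X → (0,1), then setting η(C) = Π_{a∈X\C}(1−γ(a)) · Π_{b∈C} γ(b) for C ⊆ X, one has η ∈ Δ(2^X), η strictly positive, and m_A(D) = η(D)/Σ_{C⊆A} η(C) for every D ⊆ A ⊆ X. -/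
open Classical Finset

/-- The MM (independent consideration) rule is a special case of the LA rule:
with `η(C) = ∏_{a ∈ X\C}(1-γ(a)) · ∏_{b ∈ C} γ(b)`, `η` is a strictly positive
probability measure on `2^X` and `m_A(D) = η(D)/∑_{C ⊆ A} η(C)` for `D ⊆ A`. -/
theorem MM_is_special_case_of_LA
    {X : Type*} [Fintype X] [DecidableEq X]
    (γ : X → ℝ) (m : Finset X → Finset X → ℝ) (η : Finset X → ℝ)
    (hγ : ∀ a : X, γ a ∈ Set.Ioo (0 : ℝ) 1)
    (hm : ∀ A D : Finset X, D ⊆ A →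
      m A D = (∏ a ∈ D, γ a) * ∏ b ∈ A \ D, (1 - γ b))
    (hη : ∀ C : Finset X,
      η C = (∏ a ∈ Finset.univ \ C, (1 - γ a)) * ∏ b ∈ C, γ b) :
    (∀ C : Finset X, 0 < η C) ∧
    (∑ C ∈ (Finset.univ : Finset X).powerset, η C = 1) ∧
    (∀ A D : Finset X, D ⊆ A → m A D = η D / ∑ C ∈ A.powerset, η C) := by
  -- split univ \ D for D ⊆ A
  have hsplit : ∀ A D : Finset X, D ⊆ A →
      (∏ a ∈ Finset.univ \ D, (1 - γ a)) =
        (∏ a ∈ A \ D, (1 - γ a)) * ∏ a ∈ Finset.univ \ A, (1 - γ a) := by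
    intro A D hDA
    rw [← Finset.prod_union]
    · congr 1
      ext x
      simp only [Finset.mem_sdiff, Finset.mem_union, Finset.mem_univ, true_and]
      constructor
      · intro hx
        by_cases h : x ∈ A
        · exact Or.inl ⟨h, hx⟩
        · exact Or.inr h
      · rintro (⟨_, hx⟩ | hx)
        · exact hx
        · exact fun hD => hx (hDA hD)
    · intro s hs1 hs2 x hx
      have h1 := hs1 hx
      have h2 := hs2 hx
      simp only [Finset.mem_sdiff] at h1 h2
      exact absurd h1.1 h2.2
  have hsum : ∀ A : Finset X,
      (∑ C ∈ A.powerset, η C) = ∏ a ∈ Finset.univ \ A, (1 - γ a) := by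
    intro A
    calc ∑ C ∈ A.powerset, η C
        = ∑ C ∈ A.powerset,
            ((∏ a ∈ C, γ a) * ∏ a ∈ A \ C, (1 - γ a)) *
              ∏ a ∈ Finset.univ \ A, (1 - γ a) := by
          apply Finset.sum_congr rfl
          intro C hC
          rw [hη C, hsplit A C (Finset.mem_powerset.mp hC)]
          ring
      _ = (∑ C ∈ A.powerset,
            (∏ a ∈ C, γ a) * ∏ a ∈ A \ C, (1 - γ a)) *
              ∏ a ∈ Finset.univ \ A, (1 - γ a) := by
          rw [Finset.sum_mul]
      _ = (∏ a ∈ A, (γ a + (1 - γ a))) * ∏ a ∈ Finset.univ \ A, (1 - γ a) := by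
          rw [Finset.prod_add]
      _ = ∏ a ∈ Finset.univ \ A, (1 - γ a) := by
          simp
  have hpos : ∀ C : Finset X, 0 < η C := by
    intro C
    rw [hη C]
    apply mul_pos
    · exact Finset.prod_pos fun a _ => by linarith [(hγ a).2]
    · exact Finset.prod_pos fun a _ => (hγ a).1
  refine ⟨hpos, ?_, ?_⟩
  · rw [hsum]
    simp
  · intro A D hDA
    have hden : (0:ℝ) < ∑ C ∈ A.powerset, η C := by
      rw [hsum]
      exact Finset.prod_pos fun a _ => by linarith [(hγ a).2]
    rw [hm A D hDA, eq_div_iff (ne_of_gt hden), hsum, hη D, hsplit A D hDA]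
    ring
end

section
/- The MM consideration rule is a special case of the RCG rule: with γ : X → (0,1) and η(C) = Π_{a∈X\C}(1−γ(a)) · Π_{b∈C} γ(b), for every nonempty A ⊆ X and D ⊆ A one has Σ_{C⊆X : C∩A = D} η(C) = Π_{a∈D} γ(a) · Π_{b∈A\D}(1 − γ(b)). -/
open Classical Finset

/-- The MM rule is a special case of the RCG (random categorization) rule:
with `η(C) = ∏_{a ∈ X\C}(1-γ(a)) · ∏_{b ∈ C} γ(b)`, for every nonempty menu `A`
and every `D ⊆ A`, `∑_{C ⊆ X : C ∩ A = D} η(C) = ∏_{a∈D} γ(a) · ∏_{b∈A\D} (1-γ(b))`. -/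
theorem MM_is_special_case_of_RCG
    {X : Type*} [Fintype X] [DecidableEq X]
    (γ : X → ℝ) (η : Finset X → ℝ)
    (hγ : ∀ a : X, γ a ∈ Set.Ioo (0 : ℝ) 1)
    (hη : ∀ C : Finset X,
      η C = (∏ a ∈ Finset.univ \ C, (1 - γ a)) * ∏ b ∈ C, γ b) :
    ∀ A : Finset X, A.Nonempty → ∀ D ⊆ A,
      ∑ C ∈ (Finset.univ : Finset X).powerset.filter (fun C => C ∩ A = D), η C
        = (∏ a ∈ D, γ a) * ∏ b ∈ A \ D, (1 - γ b) := by
  intro A _hA D hD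
  classical
  set S : Finset X := Finset.univ \ A with hS
  -- reindex the sum over C with C ∩ A = D by E = C \ A ⊆ S, C = D ∪ E
  have hsum : ∑ C ∈ (Finset.univ : Finset X).powerset.filter (fun C => C ∩ A = D), η C
      = ∑ E ∈ S.powerset, η (D ∪ E) := by
    refine Finset.sum_nbij' (fun C => C \ A) (fun E => D ∪ E) ?_ ?_ ?_ ?_ ?_
    · intro C hC
      simp only [Finset.mem_filter, Finset.mem_powerset] at hC ⊢
      intro x hx
      simp only [hS, Finset.mem_sdiff, Finset.mem_univ, true_and] at hx ⊢
      exact hx.2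
    · intro E hE
      simp only [Finset.mem_powerset] at hE
      simp only [Finset.mem_filter, Finset.mem_powerset]
      constructor
      · exact Finset.subset_univ _
      · ext x
        simp only [Finset.mem_inter, Finset.mem_union]
        constructor
        · rintro ⟨h1 | h1, h2⟩
          · exact h1
          · exact absurd h2 (by have := hE h1; simp [hS] at this; exact this)
        · intro h; exact ⟨Or.inl h, hD h⟩
    · intro C hC
      simp only [Finset.mem_filter, Finset.mem_powerset] at hC
      ext x
      simp only [Finset.mem_union, Finset.mem_sdiff]
      constructor
      · rintro (h | h)
        · rw [← hC.2] at h; exact (Finset.mem_inter.mp h).1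
        · exact h.1
      · intro h
        by_cases hx : x ∈ A
        · exact Or.inl (by rw [← hC.2]; exact Finset.mem_inter.mpr ⟨h, hx⟩)
        · exact Or.inr ⟨h, hx⟩
    · intro E hE
      simp only [Finset.mem_powerset] at hE
      ext x
      simp only [Finset.mem_sdiff, Finset.mem_union]
      constructor
      · rintro ⟨h | h, h2⟩
        · exact absurd (hD h) h2
        · exact h
      · intro h
        have := hE h
        simp only [hS, Finset.mem_sdiff] at this
        exact ⟨Or.inr h, this.2⟩
    · intro C hC
      simp only [Finset.mem_filter, Finset.mem_powerset] at hC
      congr 1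
      ext x
      simp only [Finset.mem_union, Finset.mem_sdiff]
      constructor
      · intro h
        by_cases hx : x ∈ A
        · exact Or.inl (by rw [← hC.2]; exact Finset.mem_inter.mpr ⟨h, hx⟩)
        · exact Or.inr ⟨h, hx⟩
      · rintro (h | h)
        · rw [← hC.2] at h; exact (Finset.mem_inter.mp h).1
        · exact h.1
  rw [hsum]
  -- compute η (D ∪ E)
  have hDS : Disjoint D S := by
    rw [Finset.disjoint_left]
    intro x hx hxS
    simp only [hS, Finset.mem_sdiff] at hxS
    exact hxS.2 (hD hx)
  have key : ∀ E ∈ S.powerset, η (D ∪ E)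
      = ((∏ a ∈ D, γ a) * ∏ b ∈ A \ D, (1 - γ b)) * ((∏ b ∈ E, γ b) * ∏ a ∈ S \ E, (1 - γ a)) := by
    intro E hE
    simp only [Finset.mem_powerset] at hE
    have hDE : Disjoint D E := hDS.mono_right hE
    have hcompl : (Finset.univ : Finset X) \ (D ∪ E) = (A \ D) ∪ (S \ E) := by
      ext x
      have hDA : x ∈ D → x ∈ A := fun h => hD h
      have hEA : x ∈ E → x ∉ A := fun h => by
        have := hE h; simp only [hS, Finset.mem_sdiff, Finset.mem_univ, true_and] at this
        exact this
      simp only [hS, Finset.mem_sdiff, Finset.mem_union, Finset.mem_univ, true_and]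
      tauto
    have hdisj2 : Disjoint (A \ D) (S \ E) := by
      rw [Finset.disjoint_left]
      intro x hx hx2
      exact (Finset.mem_sdiff.mp (Finset.mem_sdiff.mp hx2).1).2 (Finset.mem_sdiff.mp hx).1
    rw [hη, hcompl, Finset.prod_union hdisj2, Finset.prod_union hDE]
    ring
  rw [Finset.sum_congr rfl key, ← Finset.mul_sum]
  have : ∑ E ∈ S.powerset, (∏ b ∈ E, γ b) * ∏ a ∈ S \ E, (1 - γ a) = 1 := by
    rw [← Finset.prod_add]
    simp
  rw [this, mul_one]
end

section
/- Unraveling the recursion for the calibrated full-consideration rule: Let X be finite and for each nonempty A ⊆ X let m_A be a probability measure on 2^A with m_A(A) > 0. Suppose p(a,A) = Σ_{D⊆A} m_A(D) · q(a,D) for all a ∈ A and all nonempty A, where q(a,D) = Σ_{≻} π(≻)·1[a is ≻-max of D] (with q(a,∅)=0). Then the recursively defined function p_π(a,A) := (p(a,A) − Σ_{C⊊A} m_A(C) p_π(a,C)) / m_A(A) satisfies p_π(a,A) = q(a,A) = Σ_{≻} π(≻)·1[a ≻-max of A] for all a ∈ A and nonempty A ⊆ X. -/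
open Classical Finset

/-- `a` is the `r`-maximum of the consideration set `D`. -/
def IsMaxOf {X : Type*} (r : X → X → Prop) (a : X) (D : Finset X) : Prop :=
  a ∈ D ∧ ∀ b ∈ D, b ≠ a → r a b

/-- Unraveling the recursion for the calibrated full-consideration rule:
if `p(a,A) = ∑_{D ⊆ A} m_A(D) q(a,D)` with `q(a,D) = ∑_≻ π(≻) 1[a ≻-max of D]`
and `m_A(A) > 0`, then the recursively defined
`p_π(a,A) = (p(a,A) − ∑_{C ⊊ A} m_A(C) p_π(a,C)) / m_A(A)`
satisfies `p_π(a,A) = q(a,A)` for all `a ∈ A`. -/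
theorem calibrated_rule_equals_random_utility
    {X : Type*} [Fintype X] [DecidableEq X] {n : ℕ}
    (pref : Fin n → X → X → Prop) (π : Fin n → ℝ)
    (m : Finset X → Finset X → ℝ) (p pπ : X → Finset X → ℝ)
    (hord : ∀ i, IsStrictTotalOrder X (pref i))
    (hπ : ∀ i, 0 ≤ π i) (hπ1 : ∑ i, π i = 1)
    (hm : ∀ A : Finset X, A.Nonempty →
      (∀ D ∈ A.powerset, 0 ≤ m A D) ∧ (∑ D ∈ A.powerset, m A D = 1))
    (hmA : ∀ A : Finset X, A.Nonempty → 0 < m A A)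
    (hp : ∀ A : Finset X, A.Nonempty → ∀ a ∈ A,
      p a A = ∑ D ∈ A.powerset,
        m A D * ∑ i, π i * (if IsMaxOf (pref i) a D then (1 : ℝ) else 0))
    (hpπ0 : ∀ (a : X) (C : Finset X), a ∉ C → pπ a C = 0)
    (hpπ : ∀ A : Finset X, A.Nonempty → ∀ a ∈ A,
      pπ a A = (p a A - ∑ C ∈ A.powerset.erase A, m A C * pπ a C) / m A A) :
    ∀ A : Finset X, A.Nonempty → ∀ a ∈ A,
      pπ a A = ∑ i, π i * (if IsMaxOf (pref i) a A then (1 : ℝ) else 0) := by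
  intro A
  induction A using Finset.strongInduction with
  | _ A ih =>
    intro hA a ha
    have hqC : ∀ C : Finset X, a ∉ C →
        (∑ i, π i * (if IsMaxOf (pref i) a C then (1:ℝ) else 0)) = 0 := by
      intro C hc
      refine Finset.sum_eq_zero fun i _ => ?_
      simp [IsMaxOf, hc]
    have hpval := hp A hA a ha
    rw [← Finset.add_sum_erase _ _ (Finset.mem_powerset_self A)] at hpval
    have hCeq : ∀ C ∈ A.powerset.erase A,
        m A C * pπ a C = m A C * ∑ i, π i * (if IsMaxOf (pref i) a C then (1:ℝ) else 0) := by
      intro C hC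
      obtain ⟨hne, hsub⟩ := Finset.mem_erase.mp hC
      have hss : C ⊂ A := (Finset.mem_powerset.mp hsub).ssubset_of_ne hne
      by_cases hac : a ∈ C
      · rw [ih C hss ⟨a, hac⟩ a hac]
      · rw [hpπ0 a C hac, hqC C hac]
    rw [hpπ A hA a ha, Finset.sum_congr rfl hCeq, hpval]
    field_simp
    rw [add_sub_cancel_right]
    exact mul_div_cancel_left₀ _ (hmA A hA).ne'
end

section
/- Identification (Theorem 4): Let X be finite and suppose a complete stochastic choice rule P is represented by two LA-HRC pairs (m, π) and (m′, π′), where m and m′ are both logit-attention rules generated by strictly positive attention indices η, η′ ∈ Δ(2^X). Then m = m′, and moreover the induced full-consideration choice rules agree: for every nonempty A ⊆ X and a ∈ A, Σ_{≻} π(≻)·1[a ≻-max of A] = Σ_{≻} π′(≻)·1[a ≻-max of A]. -/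
open Classical Finset

/-- Identification: if a complete stochastic choice rule (including its
default-choice probabilities) is represented by two LA-HRC pairs `(m, π)` and
`(m', π')`, generated by strictly positive attention indices `η, η' ∈ Δ(2^X)`,
then `m = m'` and the induced full-consideration choice rules agree. -/
theorem LA_HRC_identification
    {X : Type*} [Fintype X] [DecidableEq X] {n n' : ℕ}
    (η η' : Finset X → ℝ)
    (m m' : Finset X → Finset X → ℝ)
    (pref : Fin n → X → X → Prop) (π : Fin n → ℝ)
    (pref' : Fin n' → X → X → Prop) (π' : Fin n' → ℝ)
    (p : X → Finset X → ℝ) (po : Finset X → ℝ)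
    (hpos : ∀ C : Finset X, 0 < η C) (hpos' : ∀ C : Finset X, 0 < η' C)
    (hsum : ∑ C ∈ (Finset.univ : Finset X).powerset, η C = 1)
    (hsum' : ∑ C ∈ (Finset.univ : Finset X).powerset, η' C = 1)
    (hLA : ∀ A D : Finset X, D ⊆ A → m A D = η D / ∑ C ∈ A.powerset, η C)
    (hLA' : ∀ A D : Finset X, D ⊆ A → m' A D = η' D / ∑ C ∈ A.powerset, η' C)
    (hord : ∀ i, IsStrictTotalOrder X (pref i))
    (hord' : ∀ i, IsStrictTotalOrder X (pref' i))
    (hπ : ∀ i, 0 ≤ π i) (hπ1 : ∑ i, π i = 1)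
    (hπ' : ∀ i, 0 ≤ π' i) (hπ1' : ∑ i, π' i = 1)
    (hrep : ∀ A : Finset X, A.Nonempty → ∀ a ∈ A,
      p a A = ∑ D ∈ A.powerset,
        m A D * ∑ i, π i * (if IsMaxOf (pref i) a D then (1 : ℝ) else 0))
    (hrep' : ∀ A : Finset X, A.Nonempty → ∀ a ∈ A,
      p a A = ∑ D ∈ A.powerset,
        m' A D * ∑ i, π' i * (if IsMaxOf (pref' i) a D then (1 : ℝ) else 0))
    (hpo : ∀ A : Finset X, A.Nonempty → po A = m A ∅)
    (hpo' : ∀ A : Finset X, A.Nonempty → po A = m' A ∅) :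
    (∀ A D : Finset X, D ⊆ A → m A D = m' A D) ∧
    (∀ A : Finset X, A.Nonempty → ∀ a ∈ A,
      ∑ i, π i * (if IsMaxOf (pref i) a A then (1 : ℝ) else 0)
        = ∑ i, π' i * (if IsMaxOf (pref' i) a A then (1 : ℝ) else 0)) := by
  classical
  -- positivity of normalizing sums
  have hSpos : ∀ A : Finset X, 0 < ∑ C ∈ A.powerset, η C := fun A =>
    Finset.sum_pos (fun C _ => hpos C) ⟨∅, Finset.empty_mem_powerset A⟩
  have hSpos' : ∀ A : Finset X, 0 < ∑ C ∈ A.powerset, η' C := fun A =>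
    Finset.sum_pos (fun C _ => hpos' C) ⟨∅, Finset.empty_mem_powerset A⟩
  set c : ℝ := η' ∅ / η ∅ with hcdef
  -- sums are proportional
  have hcall : ∀ A : Finset X,
      ∑ C ∈ A.powerset, η' C = c * ∑ C ∈ A.powerset, η C := by
    intro A
    rcases A.eq_empty_or_nonempty with rfl | hA
    · simp only [Finset.powerset_empty, Finset.sum_singleton, hcdef]
      rw [div_mul_cancel₀ _ (ne_of_gt (hpos ∅))]
    · have h1 := (hpo A hA).symm.trans (hpo' A hA)
      rw [hLA A ∅ (Finset.empty_subset A), hLA' A ∅ (Finset.empty_subset A)] at h1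
      have hS := hSpos A
      have hS' := hSpos' A
      have hη0 := hpos (∅ : Finset X)
      rw [div_eq_div_iff (ne_of_gt hS) (ne_of_gt hS')] at h1
      rw [hcdef, div_mul_eq_mul_div, eq_div_iff (ne_of_gt hη0)]
      nlinarith [h1]
  -- Möbius inversion: η' = c • η
  have hη : ∀ A : Finset X, η' A = c * η A := by
    intro A
    induction A using Finset.strongInduction with
    | _ A ih =>
      have h1 := hcall A
      rw [← Finset.sum_erase_add A.powerset η' (Finset.mem_powerset_self A),
          ← Finset.sum_erase_add A.powerset η (Finset.mem_powerset_self A)] at h1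
      have h2 : ∑ C ∈ A.powerset.erase A, η' C
          = c * ∑ C ∈ A.powerset.erase A, η C := by
        rw [Finset.mul_sum]
        refine Finset.sum_congr rfl fun C hC => ?_
        exact ih C (lt_of_le_of_ne
          (Finset.mem_powerset.1 (Finset.mem_of_mem_erase hC))
          (Finset.ne_of_mem_erase hC))
      rw [h2, mul_add] at h1
      linarith
  have hc1 : c = 1 := by
    have h := hcall Finset.univ
    rw [hsum, hsum', mul_one] at h
    exact h.symm
  have hηeq : ∀ A : Finset X, η' A = η A := fun A => by rw [hη A, hc1, one_mul]
  have hmeq : ∀ A D : Finset X, D ⊆ A → m A D = m' A D := by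
    intro A D hD
    rw [hLA A D hD, hLA' A D hD]
    simp only [hηeq]
  refine ⟨hmeq, ?_⟩
  -- identification of the full-consideration rule
  intro A
  induction A using Finset.strongInduction with
  | _ A ih =>
    intro hA a ha
    have h1 := (hrep A hA a ha).symm.trans (hrep' A hA a ha)
    have h1' : ∑ D ∈ A.powerset,
          m A D * ∑ i, π i * (if IsMaxOf (pref i) a D then (1 : ℝ) else 0)
        = ∑ D ∈ A.powerset,
          m A D * ∑ i, π' i * (if IsMaxOf (pref' i) a D then (1 : ℝ) else 0) := by
      rw [h1]
      exact Finset.sum_congr rfl fun D hD => by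
        rw [hmeq A D (Finset.mem_powerset.1 hD)]
    -- replace m by η / S and clear the common denominator
    have hS := hSpos A
    have h2 : ∑ D ∈ A.powerset,
          η D * ∑ i, π i * (if IsMaxOf (pref i) a D then (1 : ℝ) else 0)
        = ∑ D ∈ A.powerset,
          η D * ∑ i, π' i * (if IsMaxOf (pref' i) a D then (1 : ℝ) else 0) := by
      have h3 : (∑ D ∈ A.powerset,
            η D * ∑ i, π i * (if IsMaxOf (pref i) a D then (1 : ℝ) else 0))
            / (∑ C ∈ A.powerset, η C)
          = (∑ D ∈ A.powerset,
            η D * ∑ i, π' i * (if IsMaxOf (pref' i) a D then (1 : ℝ) else 0))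
            / (∑ C ∈ A.powerset, η C) := by
        rw [Finset.sum_div, Finset.sum_div]
        calc _ = ∑ D ∈ A.powerset,
              m A D * ∑ i, π i * (if IsMaxOf (pref i) a D then (1 : ℝ) else 0) := by
                refine Finset.sum_congr rfl fun D hD => ?_
                rw [hLA A D (Finset.mem_powerset.1 hD)]
                ring
          _ = ∑ D ∈ A.powerset,
              m A D * ∑ i, π' i * (if IsMaxOf (pref' i) a D then (1 : ℝ) else 0) := h1'
          _ = _ := by
                refine Finset.sum_congr rfl fun D hD => ?_
                rw [hLA A D (Finset.mem_powerset.1 hD)]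
                ring
      have h4 := (div_eq_div_iff (ne_of_gt hS) (ne_of_gt hS)).1 h3
      exact mul_right_cancel₀ (ne_of_gt hS) h4
    -- split off the top term D = A
    rw [← Finset.sum_erase_add A.powerset _ (Finset.mem_powerset_self A),
        ← Finset.sum_erase_add A.powerset _ (Finset.mem_powerset_self A)] at h2
    have h4 : ∑ D ∈ A.powerset.erase A,
          η D * ∑ i, π i * (if IsMaxOf (pref i) a D then (1 : ℝ) else 0)
        = ∑ D ∈ A.powerset.erase A,
          η D * ∑ i, π' i * (if IsMaxOf (pref' i) a D then (1 : ℝ) else 0) := by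
      refine Finset.sum_congr rfl fun D hD => ?_
      have hDA : D ⊂ A := lt_of_le_of_ne
        (Finset.mem_powerset.1 (Finset.mem_of_mem_erase hD))
        (Finset.ne_of_mem_erase hD)
      by_cases haD : a ∈ D
      · rw [ih D hDA ⟨a, haD⟩ a haD]
      · have z1 : ∑ i, π i * (if IsMaxOf (pref i) a D then (1 : ℝ) else 0) = 0 :=
          Finset.sum_eq_zero fun i _ => by
            have : ¬ IsMaxOf (pref i) a D := fun h => haD h.1
            simp [this]
        have z2 : ∑ i, π' i * (if IsMaxOf (pref' i) a D then (1 : ℝ) else 0) = 0 :=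
          Finset.sum_eq_zero fun i _ => by
            have : ¬ IsMaxOf (pref' i) a D := fun h => haD h.1
            simp [this]
        rw [z1, z2]
    rw [h4] at h2
    have h5 : η A * ∑ i, π i * (if IsMaxOf (pref i) a A then (1 : ℝ) else 0)
        = η A * ∑ i, π' i * (if IsMaxOf (pref' i) a A then (1 : ℝ) else 0) := by
      linarith
    exact mul_left_cancel₀ (ne_of_gt (hpos A)) h5
end

section
/- LA with homogeneous preferences can violate regularity (attraction effect): there exist a finite set X = {a,b,c}, a strictly positive probability measure η on 2^X, and a strict linear order ≻ on X, such that the induced LA choice rule p(x,A) = Σ_{D⊆A, x is ≻-max of D} η(D)/Σ_{C⊆A} η(C) satisfies p(a, {a,b,c}) > p(a, {a,c}). Consequently the LA model is not nested in the random utility model. -/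
open Classical Finset

noncomputable def laChoice {X : Type*} [DecidableEq X]
    (η : Finset X → ℝ) (r : X → X → Prop) (x : X) (A : Finset X) : ℝ :=
  (∑ D ∈ A.powerset,
      if x ∈ D ∧ ∀ y ∈ D, y ≠ x → r x y then η D else 0) /
    ∑ C ∈ A.powerset, η C

lemma sum8 (f : Finset (Fin 3) → ℝ) :
    ∑ C ∈ ({0,1,2} : Finset (Fin 3)).powerset, f C =
      f ∅ + f {0} + f {1} + f {0,1} + f {2} + f {0,2} + f {1,2} + f {0,1,2} := by
  rw [show ({0,1,2} : Finset (Fin 3)).powerset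
      = {∅, {0}, {1}, {0,1}, {2}, {0,2}, {1,2}, {0,1,2}} from by decide]
  rw [Finset.sum_insert (by decide), Finset.sum_insert (by decide),
    Finset.sum_insert (by decide), Finset.sum_insert (by decide),
    Finset.sum_insert (by decide), Finset.sum_insert (by decide),
    Finset.sum_insert (by decide), Finset.sum_singleton]
  ring

lemma sum4 (f : Finset (Fin 3) → ℝ) :
    ∑ C ∈ ({0,2} : Finset (Fin 3)).powerset, f C = f ∅ + f {0} + f {2} + f {0,2} := by
  rw [show ({0,2} : Finset (Fin 3)).powerset = {∅, {0}, {2}, {0,2}} from by decide]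
  rw [Finset.sum_insert (by decide), Finset.sum_insert (by decide),
    Finset.sum_insert (by decide), Finset.sum_singleton]
  ring

/-- LA with homogeneous preferences can violate regularity (attraction effect):
there exist a strictly positive attention index `η ∈ Δ(2^X)` on `X = {a,b,c}`
and a strict linear order such that `p(a,{a,b,c}) > p(a,{a,c})`. -/
theorem LA_attraction_effect_exists :
    ∃ (η : Finset (Fin 3) → ℝ) (r : Fin 3 → Fin 3 → Prop),
      (∀ C : Finset (Fin 3), 0 < η C) ∧
      (∑ C ∈ (Finset.univ : Finset (Fin 3)).powerset, η C = 1) ∧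
      IsStrictTotalOrder (Fin 3) r ∧
      laChoice η r 0 ({0, 1, 2} : Finset (Fin 3)) >
        laChoice η r 0 ({0, 2} : Finset (Fin 3)) := by
  refine ⟨fun C => if C = ({0,1} : Finset (Fin 3)) then 2/5 else 3/35,
    (· < ·), ?_, ?_, inferInstance, ?_⟩
  · intro C
    by_cases h : C = ({0,1} : Finset (Fin 3)) <;> simp [h]
  · rw [show (Finset.univ : Finset (Fin 3)) = {0,1,2} from by decide, sum8]
    norm_num [show ¬(∅:Finset (Fin 3)) = {0,1} from by decide,
      show ¬({0}:Finset (Fin 3)) = {0,1} from by decide,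
      show ¬({1}:Finset (Fin 3)) = {0,1} from by decide,
      show ¬({2}:Finset (Fin 3)) = {0,1} from by decide,
      show ¬({0,2}:Finset (Fin 3)) = {0,1} from by decide,
      show ¬({1,2}:Finset (Fin 3)) = {0,1} from by decide,
      show ¬({0,1,2}:Finset (Fin 3)) = {0,1} from by decide]
  · unfold laChoice
    rw [sum8, sum4, sum8, sum4]
    simp (config := { decide := true }) only []
    norm_num
end
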